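/- For every integer k ≥ 24 with k ≡ 2 (mod 3) (so that (4k+1)/3 and (4k-5)/3 are integers), C((4k+1)/3, k) · C((4k-5)/3, k) > C(2k-1, k). -/
import Mathlib
set_option maxHeartbeats 2000000

open Nat

private lemma fact_add_one (a : ℕ) : (a+1)! = (a+1) * a ! := Nat.factorial_succ a

private lemma fact_add_three (a : ℕ) : (a+3)! = (a+3)*(a+2)*(a+1) * a ! := by
  rw [show a+3 = a+2+1 from rfl, fact_add_one, show a+2 = a+1+1 from rfl,
    fact_add_one, fact_add_one]; ring

private lemma fact_add_four (a : ℕ) : (a+4)! = (a+4)*(a+3)*(a+2)*(a+1) * a ! := by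
  rw [show a+4 = a+3+1 from rfl, fact_add_one, fact_add_three]; ring

private lemma fact_add_six (a : ℕ) : (a+6)! = (a+6)*(a+5)*(a+4)*(a+3)*(a+2)*(a+1) * a ! := by
  rw [show a+6 = a+3+3 from rfl, fact_add_three, fact_add_three]; ring

/-- The ratio comparison: over 3 steps the RHS grows at least as fast as the LHS. -/
private lemma ratio_le (n : ℕ) :
    (6*n+52)*(6*n+53)*(6*n+54)*(6*n+55)*(6*n+56)*(6*n+57)
      * ((3*n+27)*(3*n+28)*(3*n+29)) * (n+10) * (n+8)
    ≤ (4*n+36)*(4*n+37)*(4*n+38)*(4*n+39)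
      * ((4*n+34)*(4*n+35)*(4*n+36)*(4*n+37))
      * ((3*n+26)*(3*n+27)*(3*n+28)) := by
  have h : (6*n+52)*(6*n+53)*(6*n+54)*(6*n+55)*(6*n+56)*(6*n+57)
      * ((3*n+27)*(3*n+28)*(3*n+29)) * (n+10) * (n+8)
      + (15677730585054720 + 19179160975352448 * n^1 + 10667614188959424 * n^2
        + 3560886931949280 * n^3 + 792588945516000 * n^4 + 123513568843704 * n^5
        + 13750580233032 * n^6 + 1093594643160 * n^7 + 60888668280 * n^8
        + 2260279248 * n^9 + 50346144 * n^10 + 509760 * n^11)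
      = (4*n+36)*(4*n+37)*(4*n+38)*(4*n+39)
        * ((4*n+34)*(4*n+35)*(4*n+36)*(4*n+37))
        * ((3*n+26)*(3*n+27)*(3*n+28)) := by ring
  omega

/-- The key factorial inequality, by induction in steps of one on `m` (= steps of 3 in `k`). -/
private lemma factQ (m : ℕ) (hm : 8 ≤ m) :
    (6*m+3)! * (3*m+2)! * (m+1)! * (m-1)! < (4*m+3)! * (4*m+1)! * (3*m+1)! := by
  induction m, hm using Nat.le_induction with
  | base =>
    norm_num [Nat.factorial]
  | succ m hm ih =>
    obtain ⟨n, rfl⟩ : ∃ n, m = n + 8 := ⟨m - 8, by omega⟩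
    rw [show (n+8)-1 = n+7 from rfl] at ih
    have gl : (6*(n+8+1)+3)! * (3*(n+8+1)+2)! * ((n+8+1)+1)! * ((n+8+1)-1)!
        = ((6*(n+8)+3)! * (3*(n+8)+2)! * ((n+8)+1)! * (n+7)!)
          * ((6*n+52)*(6*n+53)*(6*n+54)*(6*n+55)*(6*n+56)*(6*n+57)
            * ((3*n+27)*(3*n+28)*(3*n+29)) * (n+10) * (n+8)) := by
      rw [show 6*(n+8+1)+3 = (6*(n+8)+3)+6 by ring,
          show 3*(n+8+1)+2 = (3*(n+8)+2)+3 by ring,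
          show (n+8+1)+1 = ((n+8)+1)+1 by ring,
          show (n+8+1)-1 = (n+7)+1 by omega,
          fact_add_six (6*(n+8)+3), fact_add_three (3*(n+8)+2),
          fact_add_one ((n+8)+1), fact_add_one (n+7)]
      ring
    have gr : (4*(n+8+1)+3)! * (4*(n+8+1)+1)! * (3*(n+8+1)+1)!
        = ((4*(n+8)+3)! * (4*(n+8)+1)! * (3*(n+8)+1)!)
          * ((4*n+36)*(4*n+37)*(4*n+38)*(4*n+39)
            * ((4*n+34)*(4*n+35)*(4*n+36)*(4*n+37))
            * ((3*n+26)*(3*n+27)*(3*n+28))) := by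
      rw [show 4*(n+8+1)+3 = (4*(n+8)+3)+4 by ring,
          show 4*(n+8+1)+1 = (4*(n+8)+1)+4 by ring,
          show 3*(n+8+1)+1 = (3*(n+8)+1)+3 by ring,
          fact_add_four (4*(n+8)+3), fact_add_four (4*(n+8)+1),
          fact_add_three (3*(n+8)+1)]
      ring
    rw [gl, gr]
    have h1 : ((6*(n+8)+3)! * (3*(n+8)+2)! * ((n+8)+1)! * (n+7)!)
          * ((6*n+52)*(6*n+53)*(6*n+54)*(6*n+55)*(6*n+56)*(6*n+57)
            * ((3*n+27)*(3*n+28)*(3*n+29)) * (n+10) * (n+8))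
        < ((4*(n+8)+3)! * (4*(n+8)+1)! * (3*(n+8)+1)!)
          * ((6*n+52)*(6*n+53)*(6*n+54)*(6*n+55)*(6*n+56)*(6*n+57)
            * ((3*n+27)*(3*n+28)*(3*n+29)) * (n+10) * (n+8)) := by
      refine (Nat.mul_lt_mul_right ?_).mpr ih
      norm_num
    refine lt_of_lt_of_le h1 (Nat.mul_le_mul_left _ (ratio_le n))

private lemma key (m : ℕ) (hm : 8 ≤ m) :
    (6*m+3).choose (3*m+2) < (4*m+3).choose (3*m+2) * (4*m+1).choose (3*m+2) := by
  have h1 : (6*m+3).choose (3*m+2) * (3*m+2)! * (3*m+1)! = (6*m+3)! := by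
    have := Nat.choose_mul_factorial_mul_factorial (show 3*m+2 ≤ 6*m+3 by omega)
    rwa [show 6*m+3 - (3*m+2) = 3*m+1 by omega] at this
  have h2 : (4*m+3).choose (3*m+2) * (3*m+2)! * (m+1)! = (4*m+3)! := by
    have := Nat.choose_mul_factorial_mul_factorial (show 3*m+2 ≤ 4*m+3 by omega)
    rwa [show 4*m+3 - (3*m+2) = m+1 by omega] at this
  have h3 : (4*m+1).choose (3*m+2) * (3*m+2)! * (m-1)! = (4*m+1)! := by
    have := Nat.choose_mul_factorial_mul_factorial (show 3*m+2 ≤ 4*m+1 by omega)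
    rwa [show 4*m+1 - (3*m+2) = m-1 by omega] at this
  have hQ := factQ m hm
  refine Nat.lt_of_mul_lt_mul_right (a := (3*m+2)! * (3*m+1)! * (3*m+2)! * (m+1)! * (m-1)!) ?_
  calc (6*m+3).choose (3*m+2) * ((3*m+2)! * (3*m+1)! * (3*m+2)! * (m+1)! * (m-1)!)
      = ((6*m+3).choose (3*m+2) * (3*m+2)! * (3*m+1)!) * ((3*m+2)! * (m+1)! * (m-1)!) := by ring
    _ = (6*m+3)! * (3*m+2)! * (m+1)! * (m-1)! := by rw [h1]; ring
    _ < (4*m+3)! * (4*m+1)! * (3*m+1)! := hQ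
    _ = ((4*m+3).choose (3*m+2) * (3*m+2)! * (m+1)!)
        * ((4*m+1).choose (3*m+2) * (3*m+2)! * (m-1)!) * (3*m+1)! := by rw [h2, h3]
    _ = (4*m+3).choose (3*m+2) * (4*m+1).choose (3*m+2)
        * ((3*m+2)! * (3*m+1)! * (3*m+2)! * (m+1)! * (m-1)!) := by ring

theorem stmt_15 (k : ℕ) (hk : 24 ≤ k) (hmod : k % 3 = 2) :
    (2 * k - 1).choose k < ((4 * k + 1) / 3).choose k * ((4 * k - 5) / 3).choose k := by
  obtain ⟨m, rfl⟩ : ∃ m, k = 3*m+2 := ⟨k/3, by omega⟩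
  have hm : 8 ≤ m := by omega
  have e1 : 2 * (3*m+2) - 1 = 6*m+3 := by omega
  have e2 : (4 * (3*m+2) + 1) / 3 = 4*m+3 := by omega
  have e3 : (4 * (3*m+2) - 5) / 3 = 4*m+1 := by omega
  rw [e1, e2, e3]
  exact key m hm
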